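/- (Lemma 6.6, population computers for remainder predicates) Let θ ≥ 1, d = ⌈log₂ θ⌉, and let φ = (a1x1+…+avxv ≡ c (mod θ)) be a remainder predicate where each a_i ∈ {2^j : 0 ≤ j ≤ d−1} ∩ {1,…,θ−1} and 0 ≤ c ≤ θ−1. Then there exists a bounded population computer P=(Q,δ,I,O,H) with set of states Q = {0} ∪ {2^j : 0 ≤ j ≤ d} (hence at most d+2 states), input states I = {a1,…,av}, helper multiset H consisting of 3d agents in state 0, and output function satisfying O(S)=1 iff Σ_{q∈S} q ≡ c (mod θ), such that P decides φ (for every x ∈ ℕ^v the input with x_i agents in state a_i has output 1 iff Σa_ix_i ≡ c (mod θ)); moreover every run of P from an initial configuration with n agents has length at most (n+1)². -/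

import Mathlib

open scoped ENNReal Classical

namespace PaperPP

/-- Population computers (Angluin-style generalization). -/
structure PopComputer (σ : Type) where
  Q : Finset σ
  δ : Finset (Multiset σ × Multiset σ)
  I : Finset σ
  O : Finset σ → Option Bool
  H : Multiset σ
  delta_mem : ∀ t ∈ δ, ∀ q ∈ t.1 + t.2, q ∈ Q
  delta_card : ∀ t ∈ δ, Multiset.card t.2 = Multiset.card t.1 ∧ 2 ≤ Multiset.card t.1
  delta_supp : ∀ t ∈ δ, ∃ a b : σ, ∀ q ∈ t.1, q = a ∨ q = b
  delta_fun : ∀ t ∈ δ, ∀ u ∈ δ, t.1 = u.1 → t.2 = u.2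
  I_sub : I ⊆ Q
  H_mem : ∀ q ∈ H, q ∈ Q ∧ q ∉ I

variable {σ : Type}

def Step (P : PopComputer σ) (C C' : Multiset σ) : Prop :=
  ∃ t ∈ P.δ, t.1 ≤ C ∧ C' = C - t.1 + t.2

def Reaches (P : PopComputer σ) : Multiset σ → Multiset σ → Prop :=
  Relation.ReflTransGen (Step P)

def Terminal (P : PopComputer σ) (C : Multiset σ) : Prop :=
  ∀ t ∈ P.δ, ¬ t.1 ≤ C

def IsInput (P : PopComputer σ) (C : Multiset σ) : Prop :=
  ∀ q ∈ C, q ∈ P.I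

def Initial (P : PopComputer σ) (CI C0 : Multiset σ) : Prop :=
  ∃ CH : Multiset σ, (∀ q ∈ CH, q ∈ P.H) ∧ P.H ≤ CH ∧ C0 = CI + CH

def ReachableConfig (P : PopComputer σ) (C : Multiset σ) : Prop :=
  ∃ CI C0, IsInput P CI ∧ Initial P CI C0 ∧ Reaches P C0 C

def IsRun (P : PopComputer σ) (f : ℕ → Multiset σ) : Prop :=
  ∀ i, Step P (f i) (f (i + 1)) ∨ (Terminal P (f i) ∧ f (i + 1) = f i)

def FairRun (P : PopComputer σ) (f : ℕ → Multiset σ) : Prop :=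
  IsRun P f ∧ ∀ C : Multiset σ, {i | Reaches P (f i) C}.Infinite → ∃ j, f j = C

def StabilizesTo [DecidableEq σ] (P : PopComputer σ) (f : ℕ → Multiset σ) (b : Bool) : Prop :=
  ∃ i, ∀ C, Reaches P (f i) C → P.O C.toFinset = some b

def HasOutput [DecidableEq σ] (P : PopComputer σ) (CI : Multiset σ) (b : Bool) : Prop :=
  ∀ C0 f, Initial P CI C0 → FairRun P f → f 0 = C0 → StabilizesTo P f b

def Decides [DecidableEq σ] (P : PopComputer σ) (φ : Multiset σ → Bool) : Prop :=
  ∀ CI, IsInput P CI → HasOutput P CI (φ CI)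

def Bounded (P : PopComputer σ) : Prop :=
  ¬ ∃ f : ℕ → Multiset σ,
      (∃ CI, IsInput P CI ∧ Initial P CI (f 0)) ∧ ∀ i, Step P (f i) (f (i + 1))

def Terminating (P : PopComputer σ) : Prop :=
  ∀ f : ℕ → Multiset σ, (∃ CI, IsInput P CI ∧ Initial P CI (f 0)) → FairRun P f →
    ∃ i, Terminal P (f i)

def Binary (P : PopComputer σ) : Prop := ∀ t ∈ P.δ, Multiset.card t.1 = 2

def ConsensusOutput [DecidableEq σ] (P : PopComputer σ) : Prop :=
  ∃ Q1 : Finset σ, Q1 ⊆ P.Q ∧ ∀ S : Finset σ, S ⊆ P.Q → S.Nonempty →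
    P.O S = if S ⊆ Q1 then some true else if S ⊆ P.Q \ Q1 then some false else none

def MarkedConsensusOutput [DecidableEq σ] (P : PopComputer σ) : Prop :=
  ∃ Q0 Q1 : Finset σ, Q0 ⊆ P.Q ∧ Q1 ⊆ P.Q ∧ Disjoint Q0 Q1 ∧
    ∀ S : Finset σ, S ⊆ P.Q → S.Nonempty →
      P.O S = if (S ∩ Q1).Nonempty ∧ S ∩ Q0 = ∅ then some true
        else if (S ∩ Q0).Nonempty ∧ S ∩ Q1 = ∅ then some false else none

def IsProtocol [DecidableEq σ] (P : PopComputer σ) : Prop :=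
  Binary P ∧ P.H = 0 ∧ ConsensusOutput P

/-! Boolean circuits, used to measure the size of output functions. -/

inductive Circ (α : Type) : Type where
  | inp : α → Circ α
  | tru : Circ α
  | fal : Circ α
  | neg : Circ α → Circ α
  | conj : Circ α → Circ α → Circ α
  | disj : Circ α → Circ α → Circ α

def Circ.eval {α : Type} (v : α → Bool) : Circ α → Bool
  | .inp a => v a
  | .tru => true
  | .fal => false
  | .neg c => !(Circ.eval v c)
  | .conj c d => Circ.eval v c && Circ.eval v d
  | .disj c d => Circ.eval v c || Circ.eval v d

def Circ.gates {α : Type} : Circ α → ℕ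
  | .inp _ => 1
  | .tru => 1
  | .fal => 1
  | .neg c => Circ.gates c + 1
  | .conj c d => Circ.gates c + Circ.gates d + 1
  | .disj c d => Circ.gates c + Circ.gates d + 1

noncomputable def outSize [DecidableEq σ] (P : PopComputer σ) : ℕ :=
  sInf {n | ∃ cd cv : Circ σ, Circ.gates cd + Circ.gates cv = n ∧
    ∀ S : Finset σ, S ⊆ P.Q →
      P.O S = if Circ.eval (fun q => decide (q ∈ S)) cd then
          some (Circ.eval (fun q => decide (q ∈ S)) cv) else none}

noncomputable def csize [DecidableEq σ] (P : PopComputer σ) : ℕ :=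
  P.Q.card + Multiset.card P.H + outSize P + ∑ t ∈ P.δ, Multiset.card t.1

noncomputable def asize [DecidableEq σ] (P : PopComputer σ) : ℕ :=
  P.Q.card + Multiset.card P.H + outSize P

/-! Probabilistic execution model. -/

def pairCount [DecidableEq σ] (C r : Multiset σ) : ℕ :=
  (Multiset.powersetCard 2 C).count r

noncomputable def stepKer [DecidableEq σ] (P : PopComputer σ) (C C' : Multiset σ) : ℝ≥0∞ :=
  (∑ t ∈ P.δ, if t.1 ≤ C ∧ C' = C - t.1 + t.2 then (pairCount C t.1 : ℝ≥0∞) else 0) /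
      (Nat.choose (Multiset.card C) 2 : ℝ≥0∞) +
    (if C' = C then
      1 - (∑ t ∈ P.δ, (pairCount C t.1 : ℝ≥0∞)) / (Nat.choose (Multiset.card C) 2 : ℝ≥0∞)
    else 0)

noncomputable def hitKer [DecidableEq σ] (P : PopComputer σ) (A : Set (Multiset σ))
    (C C' : Multiset σ) : ℝ≥0∞ :=
  if C ∈ A then (if C' = C then 1 else 0) else stepKer P C C'

noncomputable def hitIter [DecidableEq σ] (P : PopComputer σ) (A : Set (Multiset σ)) :
    ℕ → Multiset σ → Multiset σ → ℝ≥0∞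
  | 0, C, C' => if C' = C then 1 else 0
  | n + 1, C, C' => ∑' D : Multiset σ, hitIter P A n C D * hitKer P A D C'

/-- Expected hitting time of the set `A`, computed as `∑ₜ Pr[Xₜ ∉ A]` for the chain
absorbed at `A`. -/
noncomputable def expHit [DecidableEq σ] (P : PopComputer σ) (A : Set (Multiset σ))
    (C0 : Multiset σ) : ℝ≥0∞ :=
  ∑' n : ℕ, ∑' C : Multiset σ, if C ∈ A then 0 else hitIter P A n C0 C

def StableConfig [DecidableEq σ] (P : PopComputer σ) (C : Multiset σ) : Prop :=
  ∃ b : Bool, ∀ C', Reaches P C C' → P.O C'.toFinset = some b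

noncomputable def expTermination [DecidableEq σ] (P : PopComputer σ) (C0 : Multiset σ) : ℝ≥0∞ :=
  expHit P {C | Terminal P C} C0

noncomputable def expStabilization [DecidableEq σ] (P : PopComputer σ) (C0 : Multiset σ) : ℝ≥0∞ :=
  expHit P {C | StableConfig P C} C0

/-! Quantifier-free Presburger arithmetic. -/

inductive QFPA (v : ℕ) : Type where
  | threshold (a : Fin v → ℤ) (c : ℤ) : QFPA v
  | remainder (a : Fin v → ℤ) (θ : ℕ) (c : Fin θ) : QFPA v
  | not (φ : QFPA v) : QFPA v
  | and (φ ψ : QFPA v) : QFPA v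
  | or (φ ψ : QFPA v) : QFPA v

def QFPA.eval {v : ℕ} : QFPA v → (Fin v → ℕ) → Bool
  | .threshold a c, x => decide (c ≤ ∑ i, a i * (x i : ℤ))
  | .remainder a θ c, x => decide ((∑ i, a i * (x i : ℤ)) % (θ : ℤ) = ((c : ℕ) : ℤ))
  | .not φ, x => !(QFPA.eval φ x)
  | .and φ ψ, x => QFPA.eval φ x && QFPA.eval ψ x
  | .or φ ψ, x => QFPA.eval φ x || QFPA.eval ψ x

def zsize (z : ℤ) : ℕ := Nat.size z.natAbs + 1

def QFPA.fsize {v : ℕ} : QFPA v → ℕ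
  | .threshold a c => (∑ i, zsize (a i)) + zsize c + 1
  | .remainder a θ c => (∑ i, zsize (a i)) + Nat.size θ + Nat.size (c : ℕ) + 1
  | .not φ => QFPA.fsize φ + 1
  | .and φ ψ => QFPA.fsize φ + QFPA.fsize ψ + 1
  | .or φ ψ => QFPA.fsize φ + QFPA.fsize ψ + 1

def QFPA.double {v : ℕ} : QFPA v → QFPA (v + v)
  | .threshold a c =>
      .threshold (fun i => Fin.addCases (fun j => a j) (fun j => 2 * a j) i) c
  | .remainder a θ c =>
      .remainder (fun i => Fin.addCases (fun j => a j) (fun j => 2 * a j) i) θ c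
  | .not φ => .not (QFPA.double φ)
  | .and φ ψ => .and (QFPA.double φ) (QFPA.double ψ)
  | .or φ ψ => .or (QFPA.double φ) (QFPA.double ψ)

def inputConfig {v : ℕ} (lab : Fin v → σ) (x : Fin v → ℕ) : Multiset σ :=
  ∑ i : Fin v, Multiset.replicate (x i) (lab i)

def DecidesQFPA [DecidableEq σ] {v : ℕ} (P : PopComputer σ) (lab : Fin v → σ)
    (φ : QFPA v) : Prop :=
  Function.Injective lab ∧ P.I = Finset.univ.image lab ∧
    ∀ x : Fin v → ℕ, HasOutput P (inputConfig lab x) (QFPA.eval φ x)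

def DecidesQFPAFrom [DecidableEq σ] {v : ℕ} (P : PopComputer σ) (lab : Fin v → σ)
    (φ : QFPA v) (k : ℕ) : Prop :=
  Function.Injective lab ∧ P.I = Finset.univ.image lab ∧
    ∀ x : Fin v → ℕ, k ≤ ∑ i, x i → HasOutput P (inputConfig lab x) (QFPA.eval φ x)

/-! Potential functions and rapidness. -/

def mweight (w : σ → ℕ) (C : Multiset σ) : ℕ := (C.map w).sum

def IsPotential (P : PopComputer σ) (w : σ → ℕ) : Prop :=
  ∀ t ∈ P.δ, mweight w t.2 + (Multiset.card t.1 - 1) ≤ mweight w t.1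

def tmin [DecidableEq σ] (C r : Multiset σ) : ℕ :=
  if h : r.toFinset.Nonempty then r.toFinset.inf' h (fun q => C.count q) else 0

def speedOn [DecidableEq σ] (T : Finset (Multiset σ × Multiset σ)) (C : Multiset σ) : ℕ :=
  ∑ t ∈ T, (tmin C t.1) ^ 2

def speed [DecidableEq σ] (P : PopComputer σ) (C : Multiset σ) : ℕ := speedOn P.δ C

def RapidAt [DecidableEq σ] (P : PopComputer σ) (w : σ → ℕ) (α : ℝ) (C : Multiset σ) : Prop :=
  ∀ Cterm, Reaches P C Cterm → Terminal P Cterm →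
    ((mweight w C : ℝ) - (mweight w Cterm : ℝ)) ^ 2 / α ≤ (speed P C : ℝ)

def countIn [DecidableEq σ] (P : PopComputer σ) (C : Multiset σ) : ℕ :=
  ∑ q ∈ P.I, C.count q

def WellInitialised [DecidableEq σ] (P : PopComputer σ) (C : Multiset σ) : Prop :=
  ReachableConfig P C ∧ 3 * (countIn P C + Multiset.card P.H) ≤ 2 * Multiset.card C

def outdeg [DecidableEq σ] (P : PopComputer σ) (q : σ) : ℕ :=
  (P.δ.filter (fun t => q ∈ t.1)).card

def IsRapid [DecidableEq σ] (P : PopComputer σ) (α : ℝ) : Prop :=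
  (∃ w : σ → ℕ, IsPotential P w ∧ ∀ C, WellInitialised P C → RapidAt P w α C) ∧
  (∃ q0 : σ, ∀ q ∈ P.Q, q ≠ q0 → outdeg P q ≤ 2) ∧
  (∀ C : Multiset σ, IsInput P C → Terminal P C) ∧
  (∀ t ∈ P.δ, ∀ q ∈ P.I, t.1.count q ≤ 1 ∧ t.2.count q = 0)

def deltaGt [DecidableEq σ] (P : PopComputer σ) (w : σ → ℕ) :
    Finset (Multiset σ × Multiset σ) :=
  P.δ.filter (fun t => mweight w t.2 < mweight w t.1)

def deltaLt [DecidableEq σ] (P : PopComputer σ) (w : σ → ℕ) :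
    Finset (Multiset σ × Multiset σ) :=
  P.δ.filter (fun t => mweight w t.1 < mweight w t.2)

def RapidAtGt [DecidableEq σ] (P : PopComputer σ) (w : σ → ℕ) (α : ℝ) (C : Multiset σ) : Prop :=
  ∀ Cterm, Reaches P C Cterm → Terminal P Cterm →
    ((mweight w C : ℝ) - (mweight w Cterm : ℝ)) ^ 2 / α ≤ (speedOn (deltaGt P w) C : ℝ)

def GroupRapidAt [DecidableEq σ] (P : PopComputer σ) {e : ℕ} (w : Fin e → σ → ℕ) (α : ℝ)
    (C : Multiset σ) : Prop :=
  Terminal P C ∨ ∃ i : Fin e,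
    RapidAtGt P (w i) α C ∧
    (∃ t ∈ deltaGt P (w i), t.1 ≤ C) ∧
    (∀ C', Reaches P C C' → ∀ t ∈ deltaLt P (w i), ¬ t.1 ≤ C')

/-- Refinement between computers over the same state space. -/
def Refines [DecidableEq σ] (P' P : PopComputer σ) (π : Multiset σ → Multiset σ) : Prop :=
  (∀ C D, ReachableConfig P' C → ReachableConfig P' D → Step P' C D →
    Reaches P (π C) (π D)) ∧
  (P.I = P'.I ∧ ∀ CI C, IsInput P' CI → Initial P' CI C →
    ((∃ DI, IsInput P DI ∧ Initial P DI (π C)) ∧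
      ∀ q ∈ P.I, (π C).count q = C.count q)) ∧
  (∀ C, ReachableConfig P' C → Terminal P' C →
    Terminal P (π C) ∧ P.O (π C).toFinset = P'.O C.toFinset)

namespace L66
open Multiset

def dig : ℕ → ℕ → Multiset ℕ
  | _, 0 => 0
  | j, (m+1) => (if (m+1) % 2 = 1 then {2^j} else 0) + dig (j+1) ((m+1)/2)
termination_by j m => m
decreasing_by exact Nat.div_lt_self (Nat.succ_pos _) one_lt_two

lemma dig_sum (m : ℕ) : ∀ j, (dig j m).sum = 2^j * m := by
  induction m using Nat.strong_induction_on with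
  | _ m ih =>
    match m with
    | 0 => intro j; simp [dig]
    | (n+1) =>
      intro j
      have h2 : (n+1)/2 < n+1 := Nat.div_lt_self (Nat.succ_pos n) one_lt_two
      rw [dig, Multiset.sum_add, ih _ h2]
      by_cases h : (n+1) % 2 = 1
      · obtain ⟨q, hq⟩ : ∃ q, n + 1 = 2*q + 1 := ⟨(n+1)/2, by omega⟩
        have hq2 : (n+1)/2 = q := by omega
        rw [if_pos h, hq2, hq]; simp [pow_succ]; ring
      · obtain ⟨q, hq⟩ : ∃ q, n + 1 = 2*q := ⟨(n+1)/2, by omega⟩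
        have hq2 : (n+1)/2 = q := by omega
        rw [if_neg h, hq2, hq]; simp [pow_succ]; ring

lemma dig_card (m : ℕ) : ∀ t j, m < 2^t → (dig j m).card ≤ t := by
  induction m using Nat.strong_induction_on with
  | _ m ih =>
    match m with
    | 0 => intro t j _; simp [dig]
    | (n+1) =>
      intro t j hlt
      have ht : t ≠ 0 := by rintro rfl; simp at hlt
      obtain ⟨s, rfl⟩ : ∃ s, t = s + 1 := ⟨t - 1, by omega⟩
      have h2 : (n+1)/2 < n+1 := Nat.div_lt_self (Nat.succ_pos n) one_lt_two
      have hlt2 : (n+1)/2 < 2^s := by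
        have : (2:ℕ)^(s+1) = 2 * 2^s := by ring
        omega
      have hrec := ih _ h2 s (j+1) hlt2
      rw [dig]
      by_cases h : (n+1) % 2 = 1 <;> simp [h] <;> omega

lemma dig_mem (m : ℕ) : ∀ j q, q ∈ dig j m → ∃ k, j ≤ k ∧ q = 2^k ∧ 2^k ≤ 2^j * m := by
  induction m using Nat.strong_induction_on with
  | _ m ih =>
    match m with
    | 0 => intro j q hq; simp [dig] at hq
    | (n+1) =>
      intro j q hq
      have h2 : (n+1)/2 < n+1 := Nat.div_lt_self (Nat.succ_pos n) one_lt_two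
      rw [dig, Multiset.mem_add] at hq
      rcases hq with hq | hq
      · by_cases h : (n+1) % 2 = 1
        · rw [if_pos h] at hq
          simp at hq
          exact ⟨j, le_refl j, hq, Nat.le_mul_of_pos_right _ (Nat.succ_pos n)⟩
        · rw [if_neg h] at hq; simp at hq
      · obtain ⟨k, hk1, hk2, hk3⟩ := ih _ h2 (j+1) q hq
        refine ⟨k, by omega, hk2, le_trans hk3 ?_⟩
        have : 2^(j+1) * ((n+1)/2) = 2^j * (2 * ((n+1)/2)) := by ring
        rw [this]
        exact Nat.mul_le_mul_left _ (by omega)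


lemma two_pow_toNat (d : ℕ) : ((2:ℤ)^d).toNat = 2^d := by
  rw [show (2:ℤ)^d = ((2^d : ℕ) : ℤ) by push_cast; ring, Int.toNat_natCast]

lemma two_pow_ne (d : ℕ) : (2:ℤ)^d ≠ 0 := pow_ne_zero _ two_ne_zero

lemma ipow_inj {j k : ℕ} (h : (2:ℤ)^j = 2^k) : j = k := by
  apply Nat.pow_right_injective (le_refl 2); exact_mod_cast h


def doub (j : ℕ) : Multiset ℤ × Multiset ℤ :=
  (Multiset.replicate 2 ((2:ℤ)^j), {(2:ℤ)^(j+1), (0:ℤ)})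

def digz (θ : ℕ) : Multiset ℤ := Multiset.map (fun n : ℕ => (n:ℤ)) (dig 1 (2^(Nat.clog 2 θ) - θ))

def red (θ : ℕ) : Multiset ℤ × Multiset ℤ :=
  (Multiset.replicate 2 ((2:ℤ)^(Nat.clog 2 θ)) + Multiset.replicate (Nat.clog 2 θ) 0,
   digz θ + Multiset.replicate (Nat.clog 2 θ + 2 - Multiset.card (digz θ)) 0)

noncomputable def delta (θ : ℕ) : Finset (Multiset ℤ × Multiset ℤ) :=
  ((Finset.range (Nat.clog 2 θ)).image doub) ∪ {red θ}

noncomputable def Qs (θ : ℕ) : Finset ℤ :=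
  insert 0 ((Finset.range (Nat.clog 2 θ + 1)).image fun j => (2:ℤ)^j)

lemma theta_le (θ : ℕ) : θ ≤ 2^(Nat.clog 2 θ) := Nat.le_pow_clog one_lt_two θ

lemma digz_card {θ : ℕ} (hθ : 1 ≤ θ) : Multiset.card (digz θ) ≤ Nat.clog 2 θ := by
  rw [digz, Multiset.card_map]
  have h : (2^(Nat.clog 2 θ) - θ) < 2^(Nat.clog 2 θ) := by have := theta_le θ; omega
  exact dig_card _ _ _ h

lemma digz_mem {θ : ℕ} (hθ : 1 ≤ θ) : ∀ q ∈ digz θ, ∃ k, 1 ≤ k ∧ k ≤ Nat.clog 2 θ ∧ q = (2:ℤ)^k := by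
  intro q hq
  simp only [digz, Multiset.mem_map] at hq
  obtain ⟨n, hn, rfl⟩ := hq
  obtain ⟨k, hk1, rfl, hk3⟩ := dig_mem _ _ _ hn
  refine ⟨k, hk1, ?_, by push_cast; ring⟩
  set d := Nat.clog 2 θ
  have h1 : (2:ℕ)^k ≤ 2^1 * (2^d - θ) := hk3
  have h2 : θ ≤ 2^d := theta_le θ
  have h3 : (2:ℕ)^k < 2^(d+1) := by
    have : (2:ℕ)^(d+1) = 2 * 2^d := by ring
    omega
  have := (Nat.pow_lt_pow_iff_right (a := 2) one_lt_two).mp h3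
  omega

lemma mem_Qs (θ : ℕ) (q : ℤ) : q ∈ Qs θ ↔ q = 0 ∨ ∃ j ≤ Nat.clog 2 θ, q = (2:ℤ)^j := by
  simp [Qs, Finset.mem_insert, Finset.mem_image, Finset.mem_range]
  constructor
  · rintro (rfl | ⟨j, hj, rfl⟩)
    · exact Or.inl rfl
    · exact Or.inr ⟨j, by omega, rfl⟩
  · rintro (rfl | ⟨j, hj, rfl⟩)
    · exact Or.inl rfl
    · exact Or.inr ⟨j, by omega, rfl⟩

lemma mem_delta (θ : ℕ) (t : Multiset ℤ × Multiset ℤ) :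
    t ∈ delta θ ↔ (∃ j < Nat.clog 2 θ, t = doub j) ∨ t = red θ := by
  simp only [delta, Finset.mem_union, Finset.mem_image, Finset.mem_range,
    Finset.mem_singleton]
  constructor
  · rintro (⟨j, hj, rfl⟩ | rfl)
    · exact Or.inl ⟨j, hj, rfl⟩
    · exact Or.inr rfl
  · rintro (⟨j, hj, rfl⟩ | rfl)
    · exact Or.inl ⟨j, hj, rfl⟩
    · exact Or.inr rfl


def Wf (C : Multiset ℤ) : ℕ := (C.map Int.toNat).sum
noncomputable def nz (C : Multiset ℤ) : ℕ := Multiset.card (C.filter (fun q => q ≠ 0))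
noncomputable def Phi (θ : ℕ) (C : Multiset ℤ) : ℕ := (Nat.clog 2 θ + 1) * Wf C + 2*θ*(nz C)

lemma Wf_add (A B : Multiset ℤ) : Wf (A + B) = Wf A + Wf B := by
  simp [Wf]
lemma nz_add (A B : Multiset ℤ) : nz (A + B) = nz A + nz B := by
  simp [nz]
lemma Phi_add (θ : ℕ) (A B : Multiset ℤ) : Phi θ (A + B) = Phi θ A + Phi θ B := by
  simp [Phi, Wf_add, nz_add]; ring

lemma Wf_replicate (n : ℕ) (x : ℤ) : Wf (Multiset.replicate n x) = n * x.toNat := by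
  simp [Wf, Multiset.map_replicate, Multiset.sum_replicate, smul_eq_mul]
lemma nz_replicate_zero (n : ℕ) : nz (Multiset.replicate n (0:ℤ)) = 0 := by
  simp [nz, Multiset.filter_eq_nil]
  intro q hq; exact Multiset.eq_of_mem_replicate hq
lemma nz_replicate_ne (n : ℕ) (x : ℤ) (hx : x ≠ 0) : nz (Multiset.replicate n x) = n := by
  rw [nz, Multiset.filter_eq_self.mpr, Multiset.card_replicate]
  intro q hq; rw [Multiset.eq_of_mem_replicate hq]; exact hx

lemma Wf_doub1 (j : ℕ) : Wf (doub j).1 = 2^(j+1) := by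
  rw [doub, Wf_replicate, two_pow_toNat]; ring
lemma Wf_doub2 (j : ℕ) : Wf (doub j).2 = 2^(j+1) := by
  show Wf ((2:ℤ)^(j+1) ::ₘ {(0:ℤ)}) = 2^(j+1)
  simp [Wf, two_pow_toNat]
lemma nz_doub1 (j : ℕ) : nz (doub j).1 = 2 := by
  rw [doub]; exact nz_replicate_ne 2 _ (two_pow_ne j)
lemma nz_doub2 (j : ℕ) : nz (doub j).2 = 1 := by
  show nz ((2:ℤ)^(j+1) ::ₘ {(0:ℤ)}) = 1
  simp [nz, Multiset.filter_cons, Multiset.filter_singleton, two_pow_ne]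

lemma Wf_digz (θ : ℕ) : Wf (digz θ) = 2 * (2^(Nat.clog 2 θ) - θ) := by
  rw [Wf, digz, Multiset.map_map]
  have : (Int.toNat ∘ fun n : ℕ => (n:ℤ)) = id := by
    funext n; simp
  rw [this, Multiset.map_id]
  have := dig_sum (2^(Nat.clog 2 θ) - θ) 1
  simpa using this

lemma nz_digz {θ : ℕ} (hθ : 1 ≤ θ) : nz (digz θ) = Multiset.card (digz θ) := by
  rw [nz, Multiset.filter_eq_self.mpr]
  intro q hq
  obtain ⟨k, _, _, rfl⟩ := digz_mem hθ q hq
  exact two_pow_ne k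

lemma Wf_red1 (θ : ℕ) : Wf (red θ).1 = 2^(Nat.clog 2 θ + 1) := by
  rw [red, Wf_add, Wf_replicate, Wf_replicate, two_pow_toNat]
  simp; ring
lemma Wf_red2 {θ : ℕ} (hθ : 1 ≤ θ) : Wf (red θ).2 + 2*θ = 2^(Nat.clog 2 θ + 1) := by
  rw [red, Wf_add, Wf_replicate, Wf_digz]
  have h := theta_le θ
  have : (2:ℕ)^(Nat.clog 2 θ + 1) = 2 * 2^(Nat.clog 2 θ) := by ring
  simp; omega
lemma nz_red1 (θ : ℕ) : nz (red θ).1 = 2 := by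
  rw [red, nz_add, nz_replicate_zero, nz_replicate_ne 2 _ (two_pow_ne _)]
lemma nz_red2 {θ : ℕ} (hθ : 1 ≤ θ) : nz (red θ).2 ≤ Nat.clog 2 θ := by
  rw [red, nz_add, nz_replicate_zero, nz_digz hθ]
  simpa using digz_card hθ

lemma card_doub1 (j : ℕ) : Multiset.card (doub j).1 = 2 := by simp [doub]
lemma card_red1 (θ : ℕ) : Multiset.card (red θ).1 = 2 + Nat.clog 2 θ := by simp [red]; omega

lemma trans_master {θ : ℕ} (hθ : 1 ≤ θ) {t : Multiset ℤ × Multiset ℤ} (ht : t ∈ delta θ) :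
    (∃ w, Wf t.1 = Wf t.2 + 2*θ*w) ∧ Phi θ t.2 + 2*θ ≤ Phi θ t.1 := by
  rw [mem_delta] at ht
  rcases ht with ⟨j, hj, rfl⟩ | rfl
  · constructor
    · exact ⟨0, by rw [Wf_doub1, Wf_doub2]; ring⟩
    · rw [Phi, Phi, Wf_doub1, Wf_doub2, nz_doub1, nz_doub2]; ring_nf; omega
  · constructor
    · exact ⟨1, by rw [Wf_red1, ← Wf_red2 hθ]; ring⟩
    · have h1 := Wf_red2 (θ := θ) hθ
      have h2 := nz_red2 (θ := θ) hθ
      rw [Phi, Phi, Wf_red1, nz_red1, ← h1]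
      set d := Nat.clog 2 θ
      set W := Wf (red θ).2
      set k := nz (red θ).2
      have : 2*θ*k ≤ 2*θ*d := by
        apply Nat.mul_le_mul_left _ h2
      nlinarith

noncomputable def PC (θ v : ℕ) (a : Fin v → ℤ) (c : ℕ) (hθ : 1 ≤ θ)
    (ha : ∀ i, ∃ j : ℕ, j < Nat.clog 2 θ ∧ a i = 2 ^ j ∧ a i < (θ : ℤ)) : PopComputer ℤ where
  Q := Qs θ
  δ := delta θ
  I := Finset.univ.image a
  O := fun S => some (decide ((∑ q ∈ S, q) % (θ:ℤ) = (c:ℤ)))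
  H := Multiset.replicate (3 * Nat.clog 2 θ) 0
  delta_mem := by
    intro t ht q hq
    rw [mem_delta] at ht
    rw [Multiset.mem_add] at hq
    rw [mem_Qs]
    rcases ht with ⟨j, hj, rfl⟩ | rfl
    · rcases hq with hq | hq
      · rw [doub] at hq
        exact Or.inr ⟨j, by omega, Multiset.eq_of_mem_replicate hq⟩
      · replace hq : q ∈ ((2:ℤ)^(j+1) ::ₘ {(0:ℤ)} : Multiset ℤ) := hq
        rcases Multiset.mem_cons.mp hq with rfl | hq
        · exact Or.inr ⟨j+1, by omega, rfl⟩
        · left; simpa using hq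
    · rcases hq with hq | hq
      · rw [red, Multiset.mem_add] at hq
        rcases hq with hq | hq
        · exact Or.inr ⟨Nat.clog 2 θ, le_refl _, Multiset.eq_of_mem_replicate hq⟩
        · exact Or.inl (Multiset.eq_of_mem_replicate hq)
      · replace hq : q ∈ digz θ + Multiset.replicate (Nat.clog 2 θ + 2 - Multiset.card (digz θ)) 0 := hq
        rw [Multiset.mem_add] at hq
        rcases hq with hq | hq
        · obtain ⟨k, _, hk, rfl⟩ := digz_mem hθ q hq
          exact Or.inr ⟨k, hk, rfl⟩
        · exact Or.inl (Multiset.eq_of_mem_replicate hq)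
  delta_card := by
    intro t ht
    rw [mem_delta] at ht
    rcases ht with ⟨j, hj, rfl⟩ | rfl
    · constructor <;> simp [doub] <;> omega
    · have hk := digz_card (θ := θ) hθ
      constructor
      · show Multiset.card (digz θ + Multiset.replicate (Nat.clog 2 θ + 2 - Multiset.card (digz θ)) 0) = _
        rw [Multiset.card_add, Multiset.card_replicate, card_red1]; omega
      · rw [card_red1]; omega

  delta_supp := by
    intro t ht
    rw [mem_delta] at ht
    rcases ht with ⟨j, hj, rfl⟩ | rfl
    · exact ⟨(2:ℤ)^j, (2:ℤ)^j, fun q hq => Or.inl (Multiset.eq_of_mem_replicate hq)⟩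
    · refine ⟨(2:ℤ)^(Nat.clog 2 θ), 0, fun q hq => ?_⟩
      rw [red, Multiset.mem_add] at hq
      rcases hq with hq | hq
      · exact Or.inl (Multiset.eq_of_mem_replicate hq)
      · exact Or.inr (Multiset.eq_of_mem_replicate hq)
  delta_fun := by
    intro t ht u hu h1
    rw [mem_delta] at ht hu
    rcases ht with ⟨j, hj, rfl⟩ | rfl <;> rcases hu with ⟨k, hk, rfl⟩ | rfl
    · have : (2:ℤ)^j = 2^k := by
        have : (2:ℤ)^j ∈ (doub k).1 := by
          rw [← h1, doub]; exact Multiset.mem_replicate.mpr ⟨by omega, rfl⟩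
        exact Multiset.eq_of_mem_replicate this
      rw [ipow_inj this]
    · exfalso
      have := congrArg Multiset.card h1
      rw [card_doub1, card_red1] at this
      omega
    · exfalso
      have := congrArg Multiset.card h1
      rw [card_doub1, card_red1] at this
      omega
    · rfl
  I_sub := by
    intro q hq
    rw [Finset.mem_image] at hq
    obtain ⟨i, _, rfl⟩ := hq
    obtain ⟨j, hj, hji, _⟩ := ha i
    rw [mem_Qs]
    exact Or.inr ⟨j, by omega, hji⟩
  H_mem := by
    intro q hq
    have hq0 : q = 0 := Multiset.eq_of_mem_replicate hq
    subst hq0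
    constructor
    · rw [mem_Qs]; exact Or.inl rfl
    · rw [Finset.mem_image]
      rintro ⟨i, _, hi⟩
      obtain ⟨j, hj, hji, _⟩ := ha i
      rw [hji] at hi
      exact two_pow_ne j hi

section Dyn
open Multiset

variable {θ v : ℕ} {a : Fin v → ℤ} {c : ℕ} {hθ : 1 ≤ θ}
  {ha : ∀ i, ∃ j : ℕ, j < Nat.clog 2 θ ∧ a i = 2 ^ j ∧ a i < (θ : ℤ)}

lemma sub_irrel (inst : DecidableEq ℤ) (C A : Multiset ℤ) :
    (@HSub.hSub (Multiset ℤ) (Multiset ℤ) (Multiset ℤ)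
      (@instHSub (Multiset ℤ) (@Multiset.instSub ℤ inst)) C A)
      = (@HSub.hSub (Multiset ℤ) (Multiset ℤ) (Multiset ℤ)
      (@instHSub (Multiset ℤ) (@Multiset.instSub ℤ Int.instDecidableEq)) C A) := by
  rw [Subsingleton.elim inst Int.instDecidableEq]

lemma step_facts {C C' : Multiset ℤ} (hstep : Step (PC θ v a c hθ ha) C C') :
    (∃ w, Wf C = Wf C' + 2*θ*w) ∧ Phi θ C' + 2*θ ≤ Phi θ C ∧
      Multiset.card C' = Multiset.card C ∧
      ((∀ q ∈ C, q ∈ Qs θ) → (∀ q ∈ C', q ∈ Qs θ)) := by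
  obtain ⟨t, ht, hle, hC'⟩ := hstep
  have ht' : t ∈ delta θ := ht
  rw [sub_irrel] at hC'
  have heq : C' + t.1 = C + t.2 := by
    rw [hC', add_right_comm, tsub_add_cancel_of_le hle]
  obtain ⟨⟨w, hw⟩, hphi⟩ := trans_master hθ ht'
  have h3 := ((PC θ v a c hθ ha).delta_card t ht).1
  refine ⟨⟨w, ?_⟩, ?_, ?_, ?_⟩
  · have h2 := congrArg Wf heq
    simp only [Wf_add] at h2
    linarith
  · have h2 := congrArg (Phi θ) heq
    simp only [Phi_add] at h2
    linarith
  · have h2 := congrArg Multiset.card heq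
    simp only [Multiset.card_add] at h2
    linarith
  · intro hQ q hq
    have hmem : q ∈ C + t.2 := heq ▸ (Multiset.mem_add.mpr (Or.inl hq))
    rcases Multiset.mem_add.mp hmem with h | h
    · exact hQ q h
    · exact (PC θ v a c hθ ha).delta_mem t ht q (Multiset.mem_add.mpr (Or.inr h))

lemma reaches_facts {C D : Multiset ℤ} (h : Reaches (PC θ v a c hθ ha) C D) :
    Wf D ≤ Wf C ∧ (Wf D : ℤ) % (θ:ℤ) = (Wf C : ℤ) % (θ:ℤ) ∧
      Multiset.card D = Multiset.card C ∧
      ((∀ q ∈ C, q ∈ Qs θ) → (∀ q ∈ D, q ∈ Qs θ)) := by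
  induction h with
  | refl => exact ⟨le_refl _, rfl, rfl, fun h => h⟩
  | @tail b d hre hstep ih =>
    obtain ⟨hW, hmod, hcard, hQ⟩ := ih
    obtain ⟨⟨w, hw⟩, _, hcard2, hQ2⟩ := step_facts hstep
    refine ⟨by omega, ?_, by omega, fun h => hQ2 (hQ h)⟩
    have hcast : (Wf b : ℤ) = (Wf d : ℤ) + (θ:ℤ) * (2*w) := by
      push_cast [hw]; ring
    calc (Wf d : ℤ) % (θ:ℤ) = ((Wf d : ℤ) + (θ:ℤ) * (2*w)) % (θ:ℤ) :=
          (Int.add_mul_emod_self_left (a := (Wf d : ℤ)) (b := (θ:ℤ)) (c := 2*w)).symm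
      _ = (Wf b : ℤ) % (θ:ℤ) := by rw [← hcast]
      _ = (Wf C : ℤ) % (θ:ℤ) := hmod

lemma run_phi (f : ℕ → Multiset ℤ) (L : ℕ)
    (hs : ∀ i < L, Step (PC θ v a c hθ ha) (f i) (f (i+1))) :
    2*θ*L + Phi θ (f L) ≤ Phi θ (f 0) := by
  induction L with
  | zero => simp
  | succ L ih =>
    have ih2 := ih (fun i hi => hs i (by omega))
    have hstep := (step_facts (hs L (by omega))).2.1
    have : (2:ℕ)*θ*(L+1) = 2*θ*L + 2*θ := by ring
    linarith

lemma input_elt (CI : Multiset ℤ) (hin : IsInput (PC θ v a c hθ ha) CI) :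
    ∀ q ∈ CI, ∃ j, j < Nat.clog 2 θ ∧ q = (2:ℤ)^j ∧ q < (θ:ℤ) := by
  intro q hq
  have h1 : q ∈ Finset.univ.image a := hin q hq
  rw [Finset.mem_image] at h1
  obtain ⟨i, _, rfl⟩ := h1
  exact ha i

lemma input_nonneg (CI : Multiset ℤ) (hin : IsInput (PC θ v a c hθ ha) CI) :
    ∀ q ∈ CI, 0 ≤ q := by
  intro q hq
  obtain ⟨j, _, rfl, _⟩ := input_elt CI hin q hq
  positivity

lemma input_W (CI : Multiset ℤ) (hin : IsInput (PC θ v a c hθ ha) CI) :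
    Wf CI + Multiset.card CI ≤ θ * Multiset.card CI := by
  obtain ⟨t, rfl⟩ : ∃ t, θ = t + 1 := ⟨θ - 1, by omega⟩
  have hb : ∀ y ∈ CI.map Int.toNat, y ≤ t := by
    intro y hy
    obtain ⟨q, hq, rfl⟩ := Multiset.mem_map.mp hy
    obtain ⟨j, _, hj2, hj3⟩ := input_elt CI hin q hq
    have h0 : 0 ≤ q := by rw [hj2]; positivity
    have := Int.toNat_of_nonneg h0
    omega
  have := Multiset.sum_le_card_nsmul _ _ hb
  rw [Multiset.card_map, smul_eq_mul] at this
  have hW : Wf CI ≤ Multiset.card CI * t := this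
  nlinarith

lemma Wf_zeros (C : Multiset ℤ) (h : ∀ q ∈ C, q = 0) : Wf C = 0 := by
  rw [Wf]
  apply Multiset.sum_eq_zero
  intro y hy
  obtain ⟨q, hq, rfl⟩ := Multiset.mem_map.mp hy
  rw [h q hq]; rfl

lemma nz_zeros (C : Multiset ℤ) (h : ∀ q ∈ C, q = 0) : nz C = 0 := by
  rw [nz, Multiset.card_eq_zero, Multiset.filter_eq_nil]
  intro q hq
  simp [h q hq]

lemma nz_le_card (C : Multiset ℤ) : nz C ≤ Multiset.card C :=
  Multiset.card_le_card (Multiset.filter_le _ _)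

lemma run_len (C0 : Multiset ℤ)
    (h : ∃ CI, IsInput (PC θ v a c hθ ha) CI ∧ Initial (PC θ v a c hθ ha) CI C0)
    (f : ℕ → Multiset ℤ) (hf0 : f 0 = C0) (L : ℕ)
    (hs : ∀ i < L, Step (PC θ v a c hθ ha) (f i) (f (i+1))) :
    L ≤ (Multiset.card C0 + 1)^2 := by
  obtain ⟨CI, hin, CH, hCH, hHle, rfl⟩ := h
  set d := Nat.clog 2 θ with hd
  have hCH0 : ∀ q ∈ CH, q = (0:ℤ) := fun q hq => Multiset.eq_of_mem_replicate (hCH q hq)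
  set p := Multiset.card CI with hp
  set u := Wf CI with hu
  set hh := Multiset.card CH with hhh
  have hhd : 3*d ≤ hh := by
    have h1 := Multiset.card_le_card hHle
    have h2 : (PC θ v a c hθ ha).H = Multiset.replicate (3*Nat.clog 2 θ) (0:ℤ) := rfl
    rw [h2, Multiset.card_replicate] at h1
    omega
  have hup : u + p ≤ θ * p := input_W CI hin
  have hphirun := run_phi (hθ := hθ) (ha := ha) f L hs
  rw [hf0] at hphirun
  have hPhi0 : Phi θ (CI + CH) = (d+1) * u + 2*θ*(nz CI) := by
    rw [Phi_add, Phi, Phi, Wf_zeros CH hCH0, nz_zeros CH hCH0, ← hd]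
    ring
  have hnz : nz CI ≤ p := nz_le_card CI
  have k2 : 2*θ*L ≤ (d+1)*u + 2*θ*p := by
    have h1 : 2*θ*(nz CI) ≤ 2*θ*p := by
      apply Nat.mul_le_mul_left _ hnz
    have h2 : 2*θ*L ≤ Phi θ (CI + CH) := le_trans (Nat.le_add_right _ _) hphirun
    linarith
  have k1 : (d+1)*u + (d+1)*p ≤ (d+1)*(θ*p) := by
    rw [← Nat.mul_add]
    exact Nat.mul_le_mul_left _ hup
  have k3 : θ*(2*L) ≤ θ*((d+3)*p) := by nlinarith
  have hL : 2*L ≤ (d+3)*p := Nat.le_of_mul_le_mul_left k3 (by omega)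
  have hcd : Multiset.card (CI + CH) = p + hh := by
    rw [Multiset.card_add]
  rw [hcd]
  have hdh : d ≤ hh := by omega
  have h5 : (d+3)*p ≤ (hh+3)*p := Nat.mul_le_mul_right _ (by omega)
  nlinarith

lemma sum_eq_Wf (C : Multiset ℤ) (h : ∀ q ∈ C, 0 ≤ q) : ((Wf C : ℤ)) = C.sum := by
  induction C using Multiset.induction_on with
  | empty => simp [Wf]
  | cons q s ih =>
    have h1 : ((Wf s : ℤ)) = s.sum := ih (fun r hr => h r (Multiset.mem_cons_of_mem hr))
    have h2 : Wf (q ::ₘ s) = q.toNat + Wf s := by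
      rw [Wf, Multiset.map_cons, Multiset.sum_cons]; rfl
    rw [Multiset.sum_cons, h2]
    push_cast
    rw [Int.toNat_of_nonneg (h q (Multiset.mem_cons_self q s)), h1]

lemma terminal_O (C : Multiset ℤ)
    (hterm : Terminal (PC θ v a c hθ ha) C) (hQ : ∀ q ∈ C, q ∈ Qs θ)
    (p w : ℕ) (hcard : p + 3*(Nat.clog 2 θ) ≤ Multiset.card C)
    (hWle : Wf C ≤ w) (hwp : w + p ≤ θ * p) :
    ∑ q ∈ C.toFinset, q = (Wf C : ℤ) := by
  set d := Nat.clog 2 θ with hd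
  have hdj : ∀ j, j < d → C.count ((2:ℤ)^j) ≤ 1 := by
    intro j hj
    by_contra hcnt
    have hmemδ : doub j ∈ (PC θ v a c hθ ha).δ := by
      show doub j ∈ delta θ
      rw [mem_delta]
      exact Or.inl ⟨j, hj, rfl⟩
    apply hterm (doub j) hmemδ
    show (doub j).1 ≤ C
    rw [doub]
    exact Multiset.le_count_iff_replicate_le.mp (by omega)
  have h2d : C.count ((2:ℤ)^d) ≤ 1 := by
    by_contra hcnt
    push_neg at hcnt
    have hmemδ : red θ ∈ (PC θ v a c hθ ha).δ := by
      show red θ ∈ delta θ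
      rw [mem_delta]
      exact Or.inr rfl
    have hred : ¬ (red θ).1 ≤ C := hterm (red θ) hmemδ
    have h0 : C.count 0 < d := by
      by_contra h0'
      push_neg at h0'
      apply hred
      rw [red]
      show Multiset.replicate 2 ((2:ℤ)^d) + Multiset.replicate d 0 ≤ C
      rw [Multiset.le_iff_count]
      intro q
      rw [Multiset.count_add, Multiset.count_replicate, Multiset.count_replicate]
      split_ifs with e1 e2 e3
      · rw [← e2] at e1; exact absurd e1 (two_pow_ne d)
      · rw [← e1]; omega
      · rw [← e3]; omega
      · simp
    set m := C.count ((2:ℤ)^d) with hmdef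
    have hrep : Multiset.replicate m ((2:ℤ)^d) ≤ C :=
      Multiset.le_count_iff_replicate_le.mp (le_refl _)
    obtain ⟨E, hE⟩ := Multiset.le_iff_exists_add.mp hrep
    have hWge : m * 2^d ≤ Wf C := by
      rw [hE, Wf_add, Wf_replicate, two_pow_toNat]
      exact Nat.le_add_right _ _
    have hcup : Multiset.card C ≤ C.count 0 + d + m := by
      have h1 : Multiset.card C = ∑ q ∈ C.toFinset, C.count q :=
        (Multiset.toFinset_sum_count_eq C).symm
      have hsub : C.toFinset ⊆ Qs θ := fun q hq => hQ q (Multiset.mem_toFinset.mp hq)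
      have h2 : ∑ q ∈ C.toFinset, C.count q ≤ ∑ q ∈ Qs θ, C.count q :=
        Finset.sum_le_sum_of_subset hsub
      have h0n : (0:ℤ) ∉ (Finset.range (d+1)).image (fun j => (2:ℤ)^j) := by
        rw [Finset.mem_image]
        rintro ⟨j, _, hj⟩
        exact two_pow_ne j hj
      have h3 : ∑ q ∈ Qs θ, C.count q
          = C.count 0 + ∑ j ∈ Finset.range (d+1), C.count ((2:ℤ)^j) := by
        rw [Qs, Finset.sum_insert h0n, Finset.sum_image]
        intro i _ j _ hij
        exact ipow_inj hij
      have h4 : ∑ j ∈ Finset.range (d+1), C.count ((2:ℤ)^j)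
          = (∑ j ∈ Finset.range d, C.count ((2:ℤ)^j)) + m :=
        Finset.sum_range_succ _ _
      have h5 : ∑ j ∈ Finset.range d, C.count ((2:ℤ)^j) ≤ ∑ _j ∈ Finset.range d, 1 :=
        Finset.sum_le_sum (fun j hj => hdj j (Finset.mem_range.mp hj))
      rw [Finset.sum_const, Finset.card_range, smul_eq_mul, mul_one] at h5
      omega
    have hm : p + 1 ≤ m := by omega
    have hmul1 : θ * (p+1) ≤ θ * m := Nat.mul_le_mul_left _ hm
    have hθ2d : θ ≤ 2^d := theta_le θ
    have hmul2 : θ * m ≤ m * 2^d := by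
      rw [Nat.mul_comm]
      exact Nat.mul_le_mul_left _ hθ2d
    linarith only [hmul1, hmul2, hWge, hWle, hwp, hθ]
  have hone : ∀ q ∈ C.toFinset, q ≠ 0 → C.count q = 1 := by
    intro q hq hq0
    have hge : 0 < C.count q := Multiset.count_pos.mpr (Multiset.mem_toFinset.mp hq)
    have hQq := hQ q (Multiset.mem_toFinset.mp hq)
    rw [mem_Qs] at hQq
    rcases hQq with rfl | ⟨j, hj, rfl⟩
    · exact absurd rfl hq0
    rcases Nat.lt_or_ge j d with hjd | hjd
    · have := hdj j hjd; omega
    · have hjd2 : j = d := by omega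
      subst hjd2
      omega
  have hnn : ∀ q ∈ C, 0 ≤ q := by
    intro q hq
    have := hQ q hq
    rw [mem_Qs] at this
    rcases this with rfl | ⟨j, _, rfl⟩
    · exact le_refl 0
    · positivity
  have hmapid : C.sum = ∑ q ∈ C.toFinset, C.count q • q := by
    have := Finset.sum_multiset_map_count C (id : ℤ → ℤ)
    simpa using this
  have hcongr : ∑ q ∈ C.toFinset, C.count q • q = ∑ q ∈ C.toFinset, q := by
    apply Finset.sum_congr rfl
    intro q hq
    by_cases h0 : q = 0
    · subst h0; simp
    · rw [hone q hq h0, one_smul]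
  rw [sum_eq_Wf C hnn, hmapid, hcongr]

lemma isrun_reaches {P : PopComputer ℤ} {f : ℕ → Multiset ℤ} (h : IsRun P f) :
    ∀ i, Reaches P (f 0) (f i) := by
  intro i
  induction i with
  | zero => exact Relation.ReflTransGen.refl
  | succ n ih =>
    rcases h n with hs | ⟨_, he⟩
    · exact ih.tail hs
    · rw [he]; exact ih

lemma terminal_fix {P : PopComputer ℤ} {C D : Multiset ℤ}
    (hterm : Terminal P C) (h : Reaches P C D) : D = C := by
  rcases (Relation.ReflTransGen.cases_head h) with rfl | ⟨b, hstep, _⟩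
  · rfl
  · obtain ⟨t, ht, hle, _⟩ := hstep
    exact absurd hle (hterm t ht)

lemma msum_sum {ι : Type} (s : Finset ι) (M : ι → Multiset ℤ) :
    (∑ i ∈ s, M i).sum = ∑ i ∈ s, (M i).sum := by
  classical
  induction s using Finset.cons_induction with
  | empty => simp
  | cons i s hi ih => rw [Finset.sum_cons, Finset.sum_cons, Multiset.sum_add, ih]

lemma inputConfig_input (x : Fin v → ℕ) :
    IsInput (PC θ v a c hθ ha) (inputConfig a x) := by
  intro q hq
  rw [inputConfig] at hq
  rw [Multiset.mem_sum] at hq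
  obtain ⟨i, _, hq⟩ := hq
  have : q = a i := Multiset.eq_of_mem_replicate hq
  subst this
  exact Finset.mem_image.mpr ⟨i, Finset.mem_univ i, rfl⟩

lemma inputConfig_sum (x : Fin v → ℕ) :
    (inputConfig a x).sum = ∑ i, a i * (x i : ℤ) := by
  rw [inputConfig, msum_sum]
  apply Finset.sum_congr rfl
  intro i _
  rw [Multiset.sum_replicate, nsmul_eq_mul, mul_comm]

lemma main_out (x : Fin v → ℕ) :
    HasOutput (PC θ v a c hθ ha) (inputConfig a x)
      (decide ((∑ i, a i * (x i : ℤ)) % (θ:ℤ) = (c:ℤ))) := by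
  intro C0 f hinit hfair hf0
  obtain ⟨CH, hCH, hHle, rfl⟩ := hinit
  set P := PC θ v a c hθ ha with hP
  set CI := inputConfig a x with hCI
  set d := Nat.clog 2 θ with hdd
  have hin : IsInput P CI := inputConfig_input x
  have hCH0 : ∀ q ∈ CH, q = (0:ℤ) := fun q hq => Multiset.eq_of_mem_replicate (hCH q hq)
  have hTi : ∃ i, Terminal P (f i) := by
    by_contra hno
    push_neg at hno
    have hstep : ∀ i, Step P (f i) (f (i+1)) := by
      intro i
      rcases hfair.1 i with h | ⟨ht, _⟩
      · exact h
      · exact absurd ht (hno i)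
    have := run_len (hθ := hθ) (ha := ha) (CI + CH) ⟨CI, hin, CH, hCH, hHle, rfl⟩ f hf0
      ((Multiset.card (CI + CH) + 1)^2 + 1) (fun i _ => hstep i)
    omega
  obtain ⟨i, hterm⟩ := hTi
  refine ⟨i, ?_⟩
  intro D hD
  have hDi : D = f i := terminal_fix hterm hD
  subst hDi
  have hre : Reaches P (f 0) (f i) := isrun_reaches hfair.1 i
  rw [hf0] at hre
  obtain ⟨hW, hmod, hcard, hQf⟩ := reaches_facts (hθ := hθ) (ha := ha) hre
  have hQ0 : ∀ q ∈ CI + CH, q ∈ Qs θ := by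
    intro q hq
    rcases Multiset.mem_add.mp hq with h | h
    · exact (PC θ v a c hθ ha).I_sub (hin q h)
    · rw [hCH0 q h, mem_Qs]; exact Or.inl rfl
  have hQ := hQf hQ0
  have hWCH : Wf CH = 0 := Wf_zeros _ hCH0
  have hW0 : Wf (CI + CH) = Wf CI := by rw [Wf_add, hWCH, add_zero]
  have hup : Wf CI + Multiset.card CI ≤ θ * Multiset.card CI := input_W CI hin
  have hcard2 : Multiset.card CI + 3*d ≤ Multiset.card (f i) := by
    have h1 : 3*d ≤ Multiset.card CH := by
      have hc1 := Multiset.card_le_card hHle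
      have hc2 : P.H = Multiset.replicate (3*Nat.clog 2 θ) (0:ℤ) := rfl
      rw [hc2, Multiset.card_replicate] at hc1
      omega
    rw [hcard, Multiset.card_add]
    omega
  have hWle : Wf (f i) ≤ Wf CI := by rw [← hW0]; exact hW
  have hsum := terminal_O (hθ := hθ) (ha := ha) (f i) hterm hQ
    (Multiset.card CI) (Wf CI) hcard2 hWle hup
  have hOdef : P.O (f i).toFinset
      = some (decide ((∑ q ∈ (f i).toFinset, q) % (θ:ℤ) = (c:ℤ))) := rfl
  rw [hOdef]
  congr 1
  apply decide_eq_decide.mpr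
  have key : (∑ q ∈ (f i).toFinset, q) % (θ:ℤ) = (∑ i, a i * (x i : ℤ)) % (θ:ℤ) := by
    rw [hsum, hmod]
    congr 1
    rw [hW0, sum_eq_Wf CI (input_nonneg CI hin), hCI, inputConfig_sum]
  rw [key]

end Dyn

end L66

/-- Lemma 6.6: population computers for remainder predicates. -/
theorem stmt5 (θ : ℕ) (hθ : 1 ≤ θ) (v : ℕ) (a : Fin v → ℤ) (c : ℕ) (hc : c < θ)
    (ha : ∀ i, ∃ j : ℕ, j < Nat.clog 2 θ ∧ a i = 2 ^ j ∧ a i < (θ : ℤ)) :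
    ∃ P : PopComputer ℤ,
      P.Q = insert 0 ((Finset.range (Nat.clog 2 θ + 1)).image fun j => (2 : ℤ) ^ j) ∧
      P.I = Finset.univ.image a ∧
      P.H = Multiset.replicate (3 * Nat.clog 2 θ) (0 : ℤ) ∧
      (∀ S : Finset ℤ, S ⊆ P.Q →
        P.O S = some (decide ((∑ q ∈ S, q) % (θ : ℤ) = (c : ℤ)))) ∧
      Bounded P ∧
      (∀ x : Fin v → ℕ,
        HasOutput P (inputConfig a x)
          (decide ((∑ i, a i * (x i : ℤ)) % (θ : ℤ) = (c : ℤ)))) ∧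
      (∀ C0 : Multiset ℤ, (∃ CI, IsInput P CI ∧ Initial P CI C0) →
        ∀ f : ℕ → Multiset ℤ, f 0 = C0 →
          ∀ L : ℕ, (∀ i < L, Step P (f i) (f (i + 1))) →
            L ≤ (Multiset.card C0 + 1) ^ 2) := by
  refine ⟨L66.PC θ v a c hθ ha, rfl, rfl, rfl, fun S _ => rfl, ?_, ?_, ?_⟩
  · rintro ⟨f, ⟨CI, hin, hinit⟩, hstep⟩
    have := L66.run_len (hθ := hθ) (ha := ha) (f 0) ⟨CI, hin, hinit⟩ f rfl
      ((Multiset.card (f 0) + 1)^2 + 1) (fun i _ => hstep i)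
    omega
  · exact L66.main_out
  · intro C0 hex f hf0 L hs
    exact L66.run_len (hθ := hθ) (ha := ha) C0 hex f hf0 L hs

end PaperPP
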